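/- Let α and β be positive coprime integers, δ a positive integer, ℓ an integer with 0 ≤ ℓ < δ, and set η = χ(−ℓ/(δβ)) and η' = χ(−(δ−ℓ)/(δβ)). Let j be an integer with j·α ≡ 1 (mod β). For a nonzero complex number z set z' = z⁻¹·χ(j/β). Then z'^β = (z^β)⁻¹, η'⁻¹·z'^{−α} = (η⁻¹·z^{−α})⁻¹, and z'^β + z'^{−β} + η'·z'^α + η'⁻¹·z'^{−α} = z^β + z^{−β} + η·z^α + η⁻¹·z^{−α}. -/

import Mathlib

/-- `χ t = exp(2πit)` -/
noncomputable def χ (t : ℂ) : ℂ := Complex.exp (2 * (Real.pi : ℂ) * Complex.I * t)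

lemma chi_ne (t : ℂ) : χ t ≠ 0 := Complex.exp_ne_zero _

lemma chi_add (a b : ℂ) : χ (a + b) = χ a * χ b := by
  simp only [χ, mul_add, Complex.exp_add]

lemma chi_zpow (t : ℂ) (n : ℤ) : χ t ^ n = χ ((n : ℂ) * t) := by
  rw [χ, χ, ← Complex.exp_int_mul]
  ring_nf

lemma chi_int (n : ℤ) : χ (n : ℂ) = 1 := by
  rw [χ, mul_comm]
  exact Complex.exp_int_mul_two_pi_mul_I n

/-- the replacement `z ↦ z⁻¹χ(j/β)` with `jα ≡ 1 (mod β)`,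
`η ↦ χ(−(δ−ℓ)/(δβ))`, inverts the Floquet pair `(z^β, η⁻¹z^{−α})` and preserves
the dispersion expression. -/
theorem stmt_3 (α β δ : ℤ) (hα : 0 < α) (hβ : 0 < β) (hcop : IsCoprime α β)
    (hδ : 0 < δ) (ℓ : ℤ) (hℓ0 : 0 ≤ ℓ) (hℓδ : ℓ < δ)
    (η η' : ℂ)
    (hη : η = χ (-(ℓ : ℂ) / ((δ : ℂ) * (β : ℂ))))
    (hη' : η' = χ (-(((δ : ℂ) - (ℓ : ℂ))) / ((δ : ℂ) * (β : ℂ))))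
    (j : ℤ) (hj : j * α ≡ 1 [ZMOD β])
    (z : ℂ) (hz : z ≠ 0)
    (z' : ℂ) (hz' : z' = z⁻¹ * χ ((j : ℂ) / (β : ℂ))) :
    z' ^ β = (z ^ β)⁻¹ ∧
    η'⁻¹ * z' ^ (-α) = (η⁻¹ * z ^ (-α))⁻¹ ∧
    z' ^ β + z' ^ (-β) + η' * z' ^ α + η'⁻¹ * z' ^ (-α)
      = z ^ β + z ^ (-β) + η * z ^ α + η⁻¹ * z ^ (-α) := by
  have hβC : (β : ℂ) ≠ 0 := Int.cast_ne_zero.2 hβ.ne'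
  have hδC : (δ : ℂ) ≠ 0 := Int.cast_ne_zero.2 hδ.ne'
  obtain ⟨k, hk⟩ : β ∣ 1 - j * α := Int.ModEq.dvd hj
  have hkC : (1 : ℂ) - (j : ℂ) * (α : ℂ) = (β : ℂ) * (k : ℂ) := by
    exact_mod_cast congrArg (fun x : ℤ => (x : ℂ)) hk
  have h1 : χ ((j : ℂ) / (β : ℂ)) ^ β = 1 := by
    rw [chi_zpow]
    have : (β : ℂ) * ((j : ℂ) / (β : ℂ)) = ((j : ℤ) : ℂ) := by field_simp
    rw [this, chi_int]
  have h2 : χ ((j : ℂ) / (β : ℂ)) ^ (-α) = χ (-1 / (β : ℂ)) := by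
    rw [chi_zpow]
    have : ((-α : ℤ) : ℂ) * ((j : ℂ) / (β : ℂ)) = -1 / (β : ℂ) + ((k : ℤ) : ℂ) := by
      push_cast
      field_simp
      linear_combination hkC
    rw [this, chi_add, chi_int, mul_one]
  have h3 : η * η' = χ (-1 / (β : ℂ)) := by
    rw [hη, hη', ← chi_add]
    congr 1
    field_simp
    ring
  have hηne : η ≠ 0 := hη ▸ chi_ne _
  have hη'ne : η' ≠ 0 := hη' ▸ chi_ne _
  have e1 : z' ^ β = (z ^ β)⁻¹ := by
    rw [hz', mul_zpow, h1, mul_one, inv_zpow]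
  have hz'a : z' ^ (-α) = z ^ α * (η * η') := by
    rw [hz', mul_zpow, h2, h3, inv_zpow, ← zpow_neg, neg_neg]
  have e2 : η'⁻¹ * z' ^ (-α) = (η⁻¹ * z ^ (-α))⁻¹ := by
    rw [hz'a, mul_inv, inv_inv, ← zpow_neg, neg_neg]
    field_simp
  refine ⟨e1, e2, ?_⟩
  have hzα : z ^ α ≠ 0 := zpow_ne_zero _ hz
  have hzβ : z ^ β ≠ 0 := zpow_ne_zero _ hz
  have e3 : z' ^ (-β) = z ^ β := by
    rw [zpow_neg, e1, inv_inv]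
  have e4 : η' * z' ^ α = η⁻¹ * z ^ (-α) := by
    have : z' ^ α = (z' ^ (-α))⁻¹ := by rw [← zpow_neg, neg_neg]
    rw [this, hz'a, zpow_neg]
    field_simp
  rw [e1, e2, e3, e4, zpow_neg z β, zpow_neg z α]
  field_simp
  ring
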